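/- Let G=(V,E) be a finite connected graph, x₀ ∈ ℝ^V, and for v ∈ V let f_v(x) = |x − x₀(v)|. Let 𝒰 be the set of all permutations of d, where d = (−1,…,−1,0,1,…,1) if |V| is odd and d = (−1,…,−1,1,…,1) if |V| is even, and λ₀ = max{‖u‖_* : u ∈ 𝒰}. Then for every λ > λ₀, the set of minimizers of Σ_v |x(v) − x₀(v)| + λ‖x‖_TV over ℝ^V equals { m·1_V : m ∈ median(x₀) }, where median(x₀) is the set of medians of the values (x₀(v))_{v∈V}. -/

import Mathlib

open Finset

noncomputable section

/-- Discrete total variation. -/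
def tvNorm {V : Type*} [Fintype V] (G : SimpleGraph V) [DecidableRel G.Adj]
    (x : V → ℝ) : ℝ :=
  (1 / 2) * ∑ v, ∑ w, if G.Adj v w then |x w - x v| else 0

section lems
variable {V : Type*} [Fintype V] (G : SimpleGraph V) [DecidableRel G.Adj]

lemma tvNorm_nonneg (x : V → ℝ) : 0 ≤ tvNorm G x := by
  unfold tvNorm
  have : (0:ℝ) ≤ ∑ v, ∑ w, if G.Adj v w then |x w - x v| else 0 := by
    apply Finset.sum_nonneg; intro v _; apply Finset.sum_nonneg; intro w _
    positivity
  linarith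

lemma tvNorm_smul (c : ℝ) (x : V → ℝ) :
    tvNorm G (fun v => c * x v) = |c| * tvNorm G x := by
  unfold tvNorm
  have : ∀ v w : V, (if G.Adj v w then |c * x w - c * x v| else 0)
      = |c| * (if G.Adj v w then |x w - x v| else 0) := by
    intro v w
    rw [mul_ite, mul_zero, ← abs_mul, mul_sub]
  simp_rw [this, ← Finset.mul_sum]
  ring

lemma tvNorm_sub_const (c : ℝ) (x : V → ℝ) :
    tvNorm G (fun v => x v - c) = tvNorm G x := by
  unfold tvNorm
  congr 1; apply Finset.sum_congr rfl; intro v _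
  apply Finset.sum_congr rfl; intro w _
  congr 1
  ring_nf

end lems

section lems2
variable {V : Type*} [Fintype V] (G : SimpleGraph V) [DecidableRel G.Adj]

lemma dart_sum [DecidableEq V] (x : V → ℝ) :
    ∑ d : G.Dart, |x d.toProd.2 - x d.toProd.1| = 2 * tvNorm G x := by
  have h0 : ∑ d : G.Dart, |x d.toProd.2 - x d.toProd.1|
      = ∑ p : {p : V × V // G.Adj p.1 p.2}, |x p.1.2 - x p.1.1| :=
    Fintype.sum_equiv
      ⟨fun d => ⟨d.toProd, d.adj⟩, fun p => ⟨p.1, p.2⟩, fun d => rfl, fun p => rfl⟩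
      _ _ (fun d => rfl)
  rw [h0]
  have h1 : ∑ p : {p : V × V // G.Adj p.1 p.2}, |x p.1.2 - x p.1.1|
      = ∑ p ∈ (Finset.univ : Finset (V × V)).filter (fun p => G.Adj p.1 p.2),
          |x p.2 - x p.1| := by
    rw [← Finset.sum_subtype_eq_sum_filter]
    apply Finset.sum_congr
    · simp [Finset.subtype_univ]
    · intros; rfl
  rw [h1, Finset.sum_filter, Fintype.sum_prod_type]
  unfold tvNorm
  ring

lemma abs_sub_le_dartsum (x : V → ℝ) {v w : V} (p : G.Walk v w) :
    |x w - x v| ≤ (p.darts.map fun d => |x d.toProd.2 - x d.toProd.1|).sum := by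
  induction p with
  | nil => simp
  | @cons a b c h q ih =>
    rw [SimpleGraph.Walk.darts_cons, List.map_cons, List.sum_cons]
    have : |x c - x a| ≤ |x b - x a| + |x c - x b| := by
      have := abs_sub_le (x c) (x b) (x a)
      calc |x c - x a| = |(x b - x a) + (x c - x b)| := by ring_nf
        _ ≤ |x b - x a| + |x c - x b| := abs_add_le _ _
    exact le_trans this (by linarith [ih])

lemma abs_sub_le_two_tv [DecidableEq V] (hG : G.Connected) (x : V → ℝ) (v w : V) :
    |x w - x v| ≤ 2 * tvNorm G x := by
  obtain ⟨p⟩ := hG v w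
  set P : G.Walk v w := (p.toPath : G.Walk v w) with hP
  have hnd : P.darts.Nodup :=
    SimpleGraph.Walk.darts_nodup_of_support_nodup (p.toPath.2.support_nodup)
  have h1 := abs_sub_le_dartsum G x P
  have h2 : (P.darts.map fun d => |x d.toProd.2 - x d.toProd.1|).sum
      = ∑ d ∈ P.darts.toFinset, |x d.toProd.2 - x d.toProd.1| :=
    (List.sum_toFinset _ hnd).symm
  have h3 : ∑ d ∈ P.darts.toFinset, |x d.toProd.2 - x d.toProd.1|
      ≤ ∑ d : G.Dart, |x d.toProd.2 - x d.toProd.1| := by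
    apply Finset.sum_le_sum_of_subset_of_nonneg (Finset.subset_univ _)
    intros; positivity
  rw [dart_sum] at h3
  linarith

end lems2

section lems4
variable {V : Type*} [Fintype V] [DecidableEq V]

lemma median_count_right (x₀ : V → ℝ) (m : ℝ)
    (hm : ∀ y : ℝ, ∑ v, |m - x₀ v| ≤ ∑ v, |y - x₀ v|) :
    (Finset.univ.filter fun v => m < x₀ v).card
      ≤ (Finset.univ.filter fun v => x₀ v ≤ m).card := by
  set Q := Finset.univ.filter fun v => m < x₀ v with hQdef
  rcases Q.eq_empty_or_nonempty with hQ | hQ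
  · simp [hQ]
  · set ε := Q.inf' hQ (fun v => x₀ v - m) with hε
    have hεpos : 0 < ε := by
      rw [hε, Finset.lt_inf'_iff]
      intro v hv
      rw [hQdef, Finset.mem_filter] at hv
      linarith [hv.2]
    have point : ∀ v : V, |m + ε - x₀ v| = |m - x₀ v| + (if x₀ v ≤ m then ε else -ε) := by
      intro v
      by_cases h : x₀ v ≤ m
      · rw [if_pos h, abs_of_nonneg (by linarith), abs_of_nonneg (by linarith)]
        ring
      · push_neg at h
        have hv : v ∈ Q := by rw [hQdef, Finset.mem_filter]; exact ⟨Finset.mem_univ v, h⟩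
        have hεv : ε ≤ x₀ v - m := Finset.inf'_le _ hv
        rw [if_neg (not_le.mpr h), abs_of_nonpos (by linarith), abs_of_nonpos (by linarith)]
        ring
    have key := hm (m + ε)
    have hsplit : ∑ v, |m + ε - x₀ v|
        = (∑ v, |m - x₀ v|) + ∑ v, (if x₀ v ≤ m then ε else -ε) := by
      rw [← Finset.sum_add_distrib]
      exact Finset.sum_congr rfl fun v _ => point v
    have hite : ∑ v, (if x₀ v ≤ m then ε else -ε)
        = ((Finset.univ.filter fun v => x₀ v ≤ m).card : ℝ) * ε - (Q.card : ℝ) * ε := by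
      rw [Finset.sum_ite, Finset.sum_const, Finset.sum_const]
      have : Finset.univ.filter (fun v => ¬ x₀ v ≤ m) = Q := by
        ext v; simp [hQdef, not_le]
      rw [this, nsmul_eq_mul, nsmul_eq_mul]
      ring
    rw [hsplit, hite] at key
    have : (Q.card : ℝ) ≤ ((Finset.univ.filter fun v => x₀ v ≤ m).card : ℝ) := by
      have h2 : (Q.card : ℝ) * ε ≤ ((Finset.univ.filter fun v => x₀ v ≤ m).card : ℝ) * ε := by
        linarith
      exact le_of_mul_le_mul_right h2 hεpos
    exact_mod_cast this

lemma median_count_left (x₀ : V → ℝ) (m : ℝ)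
    (hm : ∀ y : ℝ, ∑ v, |m - x₀ v| ≤ ∑ v, |y - x₀ v|) :
    (Finset.univ.filter fun v => x₀ v < m).card
      ≤ (Finset.univ.filter fun v => m ≤ x₀ v).card := by
  have hm' : ∀ y : ℝ, ∑ v, |(-m) - (-x₀ v)| ≤ ∑ v, |y - (-x₀ v)| := by
    intro y
    have h1 : ∑ v, |(-m) - (-x₀ v)| = ∑ v, |m - x₀ v| := by
      apply Finset.sum_congr rfl; intro v _
      rw [← abs_neg]; congr 1; ring
    have h2 : ∑ v, |y - (-x₀ v)| = ∑ v, |(-y) - x₀ v| := by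
      apply Finset.sum_congr rfl; intro v _
      rw [← abs_neg]; congr 1; ring
    rw [h1, h2]; exact hm (-y)
  have := median_count_right (fun v => -x₀ v) (-m) hm'
  have e1 : (Finset.univ.filter fun v => -m < -x₀ v) = Finset.univ.filter fun v => x₀ v < m := by
    ext v; simp
  have e2 : (Finset.univ.filter fun v => -x₀ v ≤ -m) = Finset.univ.filter fun v => m ≤ x₀ v := by
    ext v; simp
  rwa [e1, e2] at this

end lems4

/-- Dual norm of the TV norm on the zero-mean subspace. -/
def dualNorm {V : Type*} [Fintype V] (G : SimpleGraph V) [DecidableRel G.Adj]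
    (u : V → ℝ) : ℝ :=
  sSup {r | ∃ x : V → ℝ, (∑ v, x v = 0) ∧ tvNorm G x ≤ 1 ∧ r = ∑ v, x v * u v}

section lems3
variable {V : Type*} [Fintype V] [DecidableEq V] (G : SimpleGraph V) [DecidableRel G.Adj]

lemma abs_le_two_tv_of_sum_zero (hG : G.Connected) (x : V → ℝ) (hx : ∑ v, x v = 0)
    (v : V) : |x v| ≤ 2 * tvNorm G x := by
  have hne : (Finset.univ : Finset V).Nonempty := by
    have : Nonempty V := hG.nonempty
    exact Finset.univ_nonempty
  rcases le_or_gt 0 (x v) with h | h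
  · have hw : ∃ w, x w ≤ 0 := by
      by_contra hc
      push_neg at hc
      have : 0 < ∑ v, x v := Finset.sum_pos (fun w _ => hc w) hne
      linarith
    obtain ⟨w, hw⟩ := hw
    have := abs_sub_le_two_tv G hG x w v
    rw [abs_of_nonneg h]
    calc x v ≤ x v - x w := by linarith
      _ ≤ |x v - x w| := le_abs_self _
      _ ≤ 2 * tvNorm G x := this
  · have hw : ∃ w, 0 ≤ x w := by
      by_contra hc
      push_neg at hc
      have : ∑ v, x v < 0 := Finset.sum_neg (fun w _ => hc w) hne
      linarith
    obtain ⟨w, hw⟩ := hw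
    have := abs_sub_le_two_tv G hG x v w
    rw [abs_of_neg h]
    calc -x v ≤ x w - x v := by linarith
      _ ≤ |x w - x v| := le_abs_self _
      _ ≤ 2 * tvNorm G x := this

lemma dualNorm_bddAbove (hG : G.Connected) (u : V → ℝ) :
    BddAbove {r | ∃ x : V → ℝ, (∑ v, x v = 0) ∧ tvNorm G x ≤ 1 ∧ r = ∑ v, x v * u v} := by
  refine ⟨∑ v, 2 * |u v|, ?_⟩
  rintro r ⟨x, hx0, hx1, rfl⟩
  calc ∑ v, x v * u v ≤ ∑ v, 2 * |u v| := by
        apply Finset.sum_le_sum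
        intro v _
        calc x v * u v ≤ |x v * u v| := le_abs_self _
          _ = |x v| * |u v| := abs_mul _ _
          _ ≤ 2 * |u v| := by
              apply mul_le_mul_of_nonneg_right _ (abs_nonneg _)
              have := abs_le_two_tv_of_sum_zero G hG x hx0 v
              linarith
    _ = ∑ v, 2 * |u v| := rfl

lemma zero_mem_dual_set (u : V → ℝ) :
    (0:ℝ) ∈ {r | ∃ x : V → ℝ, (∑ v, x v = 0) ∧ tvNorm G x ≤ 1 ∧ r = ∑ v, x v * u v} := by
  refine ⟨fun _ => 0, by simp, ?_, by simp⟩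
  have : tvNorm G (fun _ => (0:ℝ)) = 0 := by
    unfold tvNorm; simp
  simp [this]

lemma dualNorm_nonneg (hG : G.Connected) (u : V → ℝ) : 0 ≤ dualNorm G u :=
  le_csSup (dualNorm_bddAbove G hG u) (zero_mem_dual_set G u)

lemma sum_mul_le_dualNorm_mul (hG : G.Connected) (u x : V → ℝ) (hx : ∑ v, x v = 0) :
    ∑ v, x v * u v ≤ dualNorm G u * tvNorm G x := by
  rcases eq_or_lt_of_le (tvNorm_nonneg G x) with h | h
  · have hc : ∀ v, x v = 0 := by
      intro v
      have h2 := abs_le_two_tv_of_sum_zero G hG x hx v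
      rw [← h] at h2
      have h5 := neg_abs_le (x v)
      have h6 := le_abs_self (x v)
      linarith
    have : ∑ v, x v * u v = 0 := by
      apply Finset.sum_eq_zero; intro v _; rw [hc v, zero_mul]
    rw [this, ← h, mul_zero]
  · set t := tvNorm G x with ht
    have hmem : (∑ v, (t⁻¹ * x v) * u v)
        ∈ {r | ∃ x : V → ℝ, (∑ v, x v = 0) ∧ tvNorm G x ≤ 1 ∧ r = ∑ v, x v * u v} := by
      refine ⟨fun v => t⁻¹ * x v, ?_, ?_, rfl⟩
      · rw [← Finset.mul_sum, hx, mul_zero]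
      · rw [tvNorm_smul, abs_of_nonneg (by positivity), ← ht, inv_mul_cancel₀ (ne_of_gt h)]
    have h2 := le_csSup (dualNorm_bddAbove G hG u) hmem
    have h3 : ∑ v, (t⁻¹ * x v) * u v = t⁻¹ * ∑ v, x v * u v := by
      rw [Finset.mul_sum]; apply Finset.sum_congr rfl; intros; ring
    rw [h3] at h2
    have h4 := mul_le_mul_of_nonneg_left h2 (le_of_lt h)
    rw [mul_inv_cancel_left₀ (ne_of_gt h)] at h4
    calc ∑ v, x v * u v ≤ t * dualNorm G u := h4
      _ = dualNorm G u * tvNorm G x := by rw [ht]; ring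

end lems3

/-- The set `𝒰` of all permutations of the vector `d`: all coordinates `±1`
(balanced, so the sum is zero), with exactly one `0` coordinate when `|V|` is
odd. -/
def scriptU (V : Type*) [Fintype V] [DecidableEq V] : Set (V → ℝ) :=
  {u : V → ℝ | (∑ v, u v = 0) ∧ (∀ v, u v = 1 ∨ u v = -1 ∨ u v = 0) ∧
    (Finset.univ.filter fun v => u v = 0).card
      = (if Even (Fintype.card V) then 0 else 1)}

section lems5
variable {V : Type*} [Fintype V] [DecidableEq V]

lemma exists_sign_vector (x₀ : V → ℝ) (m : ℝ)
    (hm : ∀ y : ℝ, ∑ v, |m - x₀ v| ≤ ∑ v, |y - x₀ v|) :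
    ∃ s : V → ℝ, s ∈ scriptU V ∧
      ∀ v, (s v = 1 ∧ x₀ v ≤ m) ∨ (s v = -1 ∧ m ≤ x₀ v) ∨ (s v = 0 ∧ x₀ v = m) := by
  classical
  set P := Finset.univ.filter fun v => x₀ v < m with hPdef
  set Q := Finset.univ.filter fun v => m < x₀ v with hQdef
  set T := Finset.univ.filter fun v => x₀ v = m with hTdef
  set n := Fintype.card V with hndef
  set z : ℕ := if Even n then 0 else 1 with hzdef
  have hPT : Disjoint P T := by
    rw [Finset.disjoint_left]; intro v hv hv'
    rw [hPdef, Finset.mem_filter] at hv; rw [hTdef, Finset.mem_filter] at hv'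
    exact absurd hv'.2 (ne_of_lt hv.2)
  have hQT : Disjoint Q T := by
    rw [Finset.disjoint_left]; intro v hv hv'
    rw [hQdef, Finset.mem_filter] at hv; rw [hTdef, Finset.mem_filter] at hv'
    exact absurd hv'.2 (ne_of_gt hv.2)
  have hPQ : Disjoint P Q := by
    rw [Finset.disjoint_left]; intro v hv hv'
    rw [hPdef, Finset.mem_filter] at hv; rw [hQdef, Finset.mem_filter] at hv'
    linarith [hv.2, hv'.2]
  have hPTle : P ∪ T = Finset.univ.filter fun v => x₀ v ≤ m := by
    ext v; simp only [hPdef, hTdef, Finset.mem_union, Finset.mem_filter, Finset.mem_univ,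
      true_and]
    constructor
    · rintro (h | h)
      · exact le_of_lt h
      · exact le_of_eq h
    · intro h
      rcases lt_or_eq_of_le h with h | h
      · exact Or.inl h
      · exact Or.inr h
  have hQTle : Q ∪ T = Finset.univ.filter fun v => m ≤ x₀ v := by
    ext v; simp only [hQdef, hTdef, Finset.mem_union, Finset.mem_filter, Finset.mem_univ,
      true_and]
    constructor
    · rintro (h | h)
      · exact le_of_lt h
      · exact le_of_eq h.symm
    · intro h
      rcases lt_or_eq_of_le h with h | h
      · exact Or.inl h
      · exact Or.inr h.symm
  have hq : Q.card ≤ P.card + T.card := by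
    have h1 := median_count_right x₀ m hm
    rw [← hPTle, Finset.card_union_of_disjoint hPT] at h1
    exact h1
  have hp : P.card ≤ Q.card + T.card := by
    have h1 := median_count_left x₀ m hm
    rw [← hQTle, Finset.card_union_of_disjoint hQT] at h1
    exact h1
  have hn : P.card + Q.card + T.card = n := by
    have huniv : P ∪ Q ∪ T = Finset.univ := by
      ext v
      simp only [hPdef, hQdef, hTdef, Finset.mem_union, Finset.mem_filter, Finset.mem_univ,
        true_and, iff_true]
      rcases lt_trichotomy (x₀ v) m with h | h | h
      · exact Or.inl (Or.inl h)
      · exact Or.inr h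
      · exact Or.inl (Or.inr h)
    have hd : Disjoint (P ∪ Q) T := Finset.disjoint_union_left.mpr ⟨hPT, hQT⟩
    calc P.card + Q.card + T.card
        = (P ∪ Q).card + T.card := by rw [Finset.card_union_of_disjoint hPQ]
      _ = (P ∪ Q ∪ T).card := (Finset.card_union_of_disjoint hd).symm
      _ = n := by rw [huniv, Finset.card_univ]
  have hzpar : (z = 0 ∧ n % 2 = 0) ∨ (z = 1 ∧ n % 2 = 1) := by
    by_cases h : Even n
    · exact Or.inl ⟨by rw [hzdef, if_pos h], Nat.even_iff.mp h⟩
    · exact Or.inr ⟨by rw [hzdef, if_neg h], Nat.odd_iff.mp (Nat.not_even_iff_odd.mp h)⟩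
  obtain ⟨a, b, hab, hbal⟩ : ∃ a b : ℕ, a + b + z = T.card ∧ P.card + a = Q.card + b :=
    ⟨(T.card + Q.card - P.card - z) / 2, (T.card + P.card - Q.card - z) / 2,
      by omega, by omega⟩
  obtain ⟨A, hA, hAcard⟩ := Finset.exists_subset_card_eq (show a ≤ T.card by omega)
  obtain ⟨B, hB, hBcard⟩ := Finset.exists_subset_card_eq (s := T \ A) (n := b)
    (by rw [Finset.card_sdiff_of_subset hA]; omega)
  have hPA : Disjoint P A := hPT.mono_right hA
  have hQB : Disjoint Q B := hQT.mono_right (hB.trans (Finset.sdiff_subset))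
  have hdisj : Disjoint (P ∪ A) (Q ∪ B) := by
    rw [Finset.disjoint_union_left]
    constructor
    · rw [Finset.disjoint_union_right]
      exact ⟨hPQ, hPT.mono_right (hB.trans Finset.sdiff_subset)⟩
    · rw [Finset.disjoint_union_right]
      refine ⟨(hQT.mono_right hA).symm, ?_⟩
      exact Finset.disjoint_left.mpr fun v hv hv' =>
        (Finset.mem_sdiff.mp (hB hv')).2 hv
  set s : V → ℝ := fun v => if v ∈ P ∪ A then 1 else if v ∈ Q ∪ B then -1 else 0 with hsdef
  have htri : ∀ v, (s v = 1 ∧ x₀ v ≤ m) ∨ (s v = -1 ∧ m ≤ x₀ v) ∨ (s v = 0 ∧ x₀ v = m) := by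
    intro v
    by_cases h1 : v ∈ P ∪ A
    · refine Or.inl ⟨by rw [hsdef]; simp [h1], ?_⟩
      rcases Finset.mem_union.mp h1 with h | h
      · rw [hPdef, Finset.mem_filter] at h; exact le_of_lt h.2
      · have := hA h; rw [hTdef, Finset.mem_filter] at this; exact le_of_eq this.2
    · by_cases h2 : v ∈ Q ∪ B
      · refine Or.inr (Or.inl ⟨by rw [hsdef]; simp [h1, h2], ?_⟩)
        rcases Finset.mem_union.mp h2 with h | h
        · rw [hQdef, Finset.mem_filter] at h; exact le_of_lt h.2
        · have := (hB h); rw [Finset.mem_sdiff, hTdef, Finset.mem_filter] at this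
          exact le_of_eq this.1.2.symm
      · refine Or.inr (Or.inr ⟨by rw [hsdef]; simp [h1, h2], ?_⟩)
        have hvP : v ∉ P := fun h => h1 (Finset.mem_union_left _ h)
        have hvQ : v ∉ Q := fun h => h2 (Finset.mem_union_left _ h)
        rw [hPdef, Finset.mem_filter] at hvP; rw [hQdef, Finset.mem_filter] at hvQ
        push_neg at hvP hvQ
        exact le_antisymm (hvQ (Finset.mem_univ v)) (hvP (Finset.mem_univ v))
  have hcardPA : (P ∪ A).card = P.card + a := by
    rw [Finset.card_union_of_disjoint hPA, hAcard]
  have hcardQB : (Q ∪ B).card = Q.card + b := by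
    rw [Finset.card_union_of_disjoint hQB, hBcard]
  refine ⟨s, ⟨?_, ?_, ?_⟩, htri⟩
  · -- sum zero
    have hsval : ∀ v, s v = (if v ∈ P ∪ A then (1:ℝ) else 0)
        - (if v ∈ Q ∪ B then (1:ℝ) else 0) := by
      intro v
      by_cases h1 : v ∈ P ∪ A
      · have h2 : v ∉ Q ∪ B := Finset.disjoint_left.mp hdisj h1
        rw [hsdef]; simp [h1, h2]
      · by_cases h2 : v ∈ Q ∪ B <;> (rw [hsdef]; simp [h1, h2])
    calc ∑ v, s v = ∑ v, ((if v ∈ P ∪ A then (1:ℝ) else 0)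
            - (if v ∈ Q ∪ B then (1:ℝ) else 0)) := Finset.sum_congr rfl fun v _ => hsval v
      _ = (∑ v, if v ∈ P ∪ A then (1:ℝ) else 0)
            - (∑ v, if v ∈ Q ∪ B then (1:ℝ) else 0) := Finset.sum_sub_distrib _ _
      _ = ((P ∪ A).card : ℝ) - ((Q ∪ B).card : ℝ) := by
            rw [Finset.sum_boole, Finset.sum_boole, Finset.filter_mem_eq_inter,
              Finset.filter_mem_eq_inter, Finset.univ_inter, Finset.univ_inter]
      _ = 0 := by
            rw [hcardPA, hcardQB]
            push_cast
            have : (P.card : ℝ) + a = Q.card + b := by exact_mod_cast hbal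
            linarith
  · -- values
    intro v
    rcases htri v with ⟨h, _⟩ | ⟨h, _⟩ | ⟨h, _⟩
    · exact Or.inl h
    · exact Or.inr (Or.inl h)
    · exact Or.inr (Or.inr h)
  · -- zero count
    have hset : Finset.univ.filter (fun v => s v = 0)
        = Finset.univ \ ((P ∪ A) ∪ (Q ∪ B)) := by
      ext v
      rw [Finset.mem_filter, Finset.mem_sdiff, Finset.mem_union]
      simp only [Finset.mem_univ, true_and]
      by_cases h1 : v ∈ P ∪ A
      · simp only [hsdef, if_pos h1]
        constructor
        · intro h; norm_num at h
        · intro h; exact absurd (Or.inl h1) h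
      · by_cases h2 : v ∈ Q ∪ B
        · simp only [hsdef, if_neg h1, if_pos h2]
          constructor
          · intro h; norm_num at h
          · intro h; exact absurd (Or.inr h2) h
        · simp only [hsdef, if_neg h1, if_neg h2]
          simp [h1, h2]
    rw [hset, Finset.card_sdiff_of_subset (Finset.subset_univ _), Finset.card_univ,
      Finset.card_union_of_disjoint hdisj, hcardPA, hcardQB, ← hndef, ← hzdef]
    omega

end lems5

section lems6
variable {V : Type*} [Fintype V] [DecidableEq V]

lemma exists_median [Nonempty V] (x₀ : V → ℝ) :
    ∃ m : ℝ, ∀ y : ℝ, ∑ v, |m - x₀ v| ≤ ∑ v, |y - x₀ v| := by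
  have hne : (Finset.univ : Finset V).Nonempty := Finset.univ_nonempty
  set a := Finset.univ.inf' hne x₀ with hadef
  set b := Finset.univ.sup' hne x₀ with hbdef
  have hab : a ≤ b := by
    obtain ⟨v⟩ := ‹Nonempty V›
    exact le_trans (Finset.inf'_le _ (Finset.mem_univ v)) (Finset.le_sup' _ (Finset.mem_univ v))
  have hg : Continuous (fun y : ℝ => ∑ v, |y - x₀ v|) := by
    apply continuous_finset_sum
    intro v _
    exact (continuous_id.sub continuous_const).abs
  obtain ⟨m, _, hmin⟩ := (isCompact_Icc : IsCompact (Set.Icc a b)).exists_isMinOn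
    ⟨a, Set.left_mem_Icc.mpr hab⟩ hg.continuousOn
  refine ⟨m, fun y => ?_⟩
  set y' := max a (min y b) with hy'def
  have hy' : y' ∈ Set.Icc a b := ⟨le_max_left _ _, max_le hab (min_le_right _ _)⟩
  have h1 : ∑ v, |m - x₀ v| ≤ ∑ v, |y' - x₀ v| := hmin hy'
  have h2 : ∑ v, |y' - x₀ v| ≤ ∑ v, |y - x₀ v| := by
    apply Finset.sum_le_sum
    intro v _
    have hva : a ≤ x₀ v := Finset.inf'_le _ (Finset.mem_univ v)
    have hvb : x₀ v ≤ b := Finset.le_sup' _ (Finset.mem_univ v)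
    rcases le_total y a with h | h
    · have hyy : y' = a := by
        rw [hy'def, min_eq_left (le_trans h hab), max_eq_left h]
      rw [hyy, abs_of_nonpos (by linarith), abs_of_nonpos (by linarith)]
      linarith
    · rcases le_total b y with h' | h'
      · have hyy : y' = b := by
          rw [hy'def, min_eq_right h', max_eq_right hab]
        rw [hyy, abs_of_nonneg (by linarith), abs_of_nonneg (by linarith)]
        linarith
      · have hyy : y' = y := by
          rw [hy'def, min_eq_left h', max_eq_right h]
        rw [hyy]
  linarith

lemma tvNorm_const (G : SimpleGraph V) [DecidableRel G.Adj] (c : ℝ) :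
    tvNorm G (fun _ => c) = 0 := by
  unfold tvNorm; simp

lemma key_ineq (G : SimpleGraph V) [DecidableRel G.Adj] (hG : G.Connected)
    (x₀ : V → ℝ) (m lam₀ : ℝ)
    (hlam₀ : ∀ r ∈ {r | ∃ u ∈ scriptU V, r = dualNorm G u}, r ≤ lam₀)
    (hm : ∀ y : ℝ, ∑ v, |m - x₀ v| ≤ ∑ v, |y - x₀ v|) (y : V → ℝ) :
    ∑ v, |m - x₀ v| ≤ (∑ v, |y v - x₀ v|) + lam₀ * tvNorm G y := by
  have : Nonempty V := hG.nonempty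
  obtain ⟨s, hsU, hsign⟩ := exists_sign_vector x₀ m hm
  have hsl : dualNorm G s ≤ lam₀ := hlam₀ _ ⟨s, hsU, rfl⟩
  set n : ℕ := Fintype.card V with hndef
  have hnpos : 0 < (n : ℝ) := by
    have : 0 < n := Fintype.card_pos
    exact_mod_cast this
  set c : ℝ := (∑ v, y v) / n with hcdef
  set zf : V → ℝ := fun v => y v - c with hzfdef
  have hz0 : ∑ v, zf v = 0 := by
    rw [hzfdef]
    rw [Finset.sum_sub_distrib, Finset.sum_const, Finset.card_univ, ← hndef, nsmul_eq_mul,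
      hcdef]
    field_simp
    ring
  have hneg0 : ∑ v, (fun v => -zf v) v = 0 := by
    simp only
    rw [Finset.sum_neg_distrib, hz0, neg_zero]
  have hdual := sum_mul_le_dualNorm_mul G hG s (fun v => -zf v) hneg0
  have htvneg : tvNorm G (fun v => -zf v) = tvNorm G y := by
    have h1 : tvNorm G (fun v => -zf v) = tvNorm G zf := by
      have : (fun v => -zf v) = fun v => (-1 : ℝ) * zf v := by funext v; ring
      rw [this, tvNorm_smul]
      norm_num
    rw [h1, hzfdef, tvNorm_sub_const]
  rw [htvneg] at hdual
  have htv0 : 0 ≤ tvNorm G y := tvNorm_nonneg G y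
  have hzs : -(lam₀ * tvNorm G y) ≤ ∑ v, zf v * s v := by
    have h2 : ∑ v, (fun v => -zf v) v * s v = -(∑ v, zf v * s v) := by
      rw [← Finset.sum_neg_distrib]
      apply Finset.sum_congr rfl; intros; ring
    rw [h2] at hdual
    nlinarith [hdual, mul_le_mul_of_nonneg_right hsl htv0]
  have hsy : ∑ v, s v * y v = ∑ v, zf v * s v := by
    have : ∀ v, s v * y v = zf v * s v + c * s v := by
      intro v; rw [hzfdef]; ring
    rw [Finset.sum_congr rfl fun v _ => this v, Finset.sum_add_distrib,
      ← Finset.mul_sum, hsU.1, mul_zero, add_zero]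
  have hpt : ∀ v, |m - x₀ v| + s v * (y v - m) ≤ |y v - x₀ v| := by
    intro v
    rcases hsign v with ⟨hs, hx⟩ | ⟨hs, hx⟩ | ⟨hs, hx⟩
    · rw [hs, abs_of_nonneg (by linarith), one_mul]
      calc m - x₀ v + (y v - m) = y v - x₀ v := by ring
        _ ≤ |y v - x₀ v| := le_abs_self _
    · rw [hs, abs_of_nonpos (by linarith)]
      calc -(m - x₀ v) + -1 * (y v - m) = -(y v - x₀ v) := by ring
        _ ≤ |y v - x₀ v| := neg_le_abs _
    · rw [hs, hx, zero_mul, add_zero, sub_self, abs_zero]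
      exact abs_nonneg _
  have hsum : (∑ v, |m - x₀ v|) + ∑ v, s v * (y v - m) ≤ ∑ v, |y v - x₀ v| := by
    rw [← Finset.sum_add_distrib]
    exact Finset.sum_le_sum fun v _ => hpt v
  have hsm : ∑ v, s v * (y v - m) = ∑ v, s v * y v := by
    have : ∀ v, s v * (y v - m) = s v * y v - m * s v := by intro v; ring
    rw [Finset.sum_congr rfl fun v _ => this v, Finset.sum_sub_distrib,
      ← Finset.mul_sum, hsU.1, mul_zero, sub_zero]
  rw [hsm, hsy] at hsum
  linarith

end lems6

/-- Median consensus: for `λ > λ₀ = max {‖u‖_* : u ∈ 𝒰}`, the minimizers of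
`∑_v |x(v) - x₀(v)| + λ‖x‖_TV` are exactly the constant vectors `m·1` with `m`
a median of `(x₀(v))_v`. -/
theorem median_consensus {V : Type*} [Fintype V] [DecidableEq V]
    (G : SimpleGraph V) [DecidableRel G.Adj] (hG : G.Connected)
    (x₀ : V → ℝ) (lam lam₀ : ℝ)
    (hlam₀ : IsGreatest {r | ∃ u ∈ scriptU V, r = dualNorm G u} lam₀)
    (hlam : lam₀ < lam) :
    {x : V → ℝ | ∀ y : V → ℝ,
        (∑ v, |x v - x₀ v|) + lam * tvNorm G x
          ≤ (∑ v, |y v - x₀ v|) + lam * tvNorm G y}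
      = {x : V → ℝ | ∃ m : ℝ,
          (∀ y : ℝ, (∑ v, |m - x₀ v|) ≤ ∑ v, |y - x₀ v|) ∧
          x = fun _ => m} := by
  have hne : Nonempty V := hG.nonempty
  ext x
  simp only [Set.mem_setOf_eq]
  constructor
  · intro hx
    obtain ⟨m, hm⟩ := exists_median x₀
    have hkey := key_ineq G hG x₀ m lam₀ hlam₀.2 hm
    have h1 := hx (fun _ => m)
    rw [tvNorm_const, mul_zero, add_zero] at h1
    have h2 := hkey x
    have htvnn := tvNorm_nonneg G x
    have htv0 : tvNorm G x = 0 := by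
      by_contra hc
      have htvpos : 0 < tvNorm G x := lt_of_le_of_ne htvnn (Ne.symm hc)
      have h3 : lam * tvNorm G x ≤ lam₀ * tvNorm G x := by linarith
      have h4 : lam₀ * tvNorm G x < lam * tvNorm G x :=
        mul_lt_mul_of_pos_right hlam htvpos
      linarith
    have hconst : ∀ v w : V, x v = x w := by
      intro v w
      have := abs_sub_le_two_tv G hG x v w
      rw [htv0] at this
      have h5 := abs_nonneg (x w - x v)
      have h6 := le_abs_self (x w - x v)
      have h7 := neg_abs_le (x w - x v)
      linarith
    obtain ⟨v₀⟩ := hne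
    refine ⟨x v₀, ?_, funext fun v => hconst v v₀⟩
    intro y
    have h8 := hx (fun _ => y)
    rw [tvNorm_const, mul_zero, add_zero, htv0, mul_zero, add_zero] at h8
    calc ∑ v, |x v₀ - x₀ v| = ∑ v, |x v - x₀ v| :=
          Finset.sum_congr rfl fun v _ => by rw [hconst v v₀]
      _ ≤ ∑ v, |y - x₀ v| := h8
  · rintro ⟨m, hm, rfl⟩ y
    have hkey := key_ineq G hG x₀ m lam₀ hlam₀.2 hm y
    rw [tvNorm_const, mul_zero, add_zero]
    have htv := tvNorm_nonneg G y
    nlinarith [mul_le_mul_of_nonneg_right (le_of_lt hlam) htv]
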